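/- Let u : [0,1] × [0,1] → ℝ be continuous, let L > 0 be such that |u(x,y) − u(x',y)| ≤ L|x − x'| and |u(x,y) − u(x,y')| ≤ L|y − y'| for all x, x', y, y' ∈ [0,1], and let ε > 0. Set h := ⌈L/(2ε)⌉ and let G := {i/h : i = 0, 1, …, h} ⊆ [0,1] be the uniform grid with h intervals. Then |sup_{x∈[0,1]} inf_{y∈[0,1]} u(x,y) − max_{x∈G} min_{y∈G} u(x,y)| ≤ L/(2h) ≤ ε. -/

import Mathlib

theorem uniform_grid_maximin_approx
    (u : ℝ × ℝ → ℝ)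
    (hu : ContinuousOn u (Set.Icc (0:ℝ) 1 ×ˢ Set.Icc (0:ℝ) 1))
    (L : ℝ) (hL : 0 < L)
    (hLipX : ∀ x ∈ Set.Icc (0:ℝ) 1, ∀ x' ∈ Set.Icc (0:ℝ) 1, ∀ y ∈ Set.Icc (0:ℝ) 1,
      |u (x, y) - u (x', y)| ≤ L * |x - x'|)
    (hLipY : ∀ x ∈ Set.Icc (0:ℝ) 1, ∀ y ∈ Set.Icc (0:ℝ) 1, ∀ y' ∈ Set.Icc (0:ℝ) 1,
      |u (x, y) - u (x, y')| ≤ L * |y - y'|)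
    (ε : ℝ) (hε : 0 < ε)
    (h : ℕ) (hh : h = ⌈L / (2 * ε)⌉₊) :
    |(⨆ x : Set.Icc (0:ℝ) 1, ⨅ y : Set.Icc (0:ℝ) 1, u (↑x, ↑y)) -
        (Finset.range (h + 1)).sup' (by simp) (fun i =>
          (Finset.range (h + 1)).inf' (by simp) (fun j =>
            u ((i : ℝ) / (h : ℝ), (j : ℝ) / (h : ℝ))))| ≤ L / (2 * h) ∧
      L / (2 * h) ≤ ε := by
  haveI hI : Nonempty (Set.Icc (0:ℝ) 1) := ⟨⟨0, by norm_num⟩⟩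
  have h0I : (0:ℝ) ∈ Set.Icc (0:ℝ) 1 := by norm_num
  have hh0 : 0 < h := by
    rw [hh]; exact Nat.ceil_pos.mpr (by positivity)
  have hhR : (0:ℝ) < h := by exact_mod_cast hh0
  -- grid points are in [0,1]
  have hgrid_mem : ∀ i ∈ Finset.range (h+1), ((i:ℝ)/h) ∈ Set.Icc (0:ℝ) 1 := by
    intro i hi
    rw [Finset.mem_range, Nat.lt_succ_iff] at hi
    constructor
    · positivity
    · rw [div_le_one hhR]; exact_mod_cast hi
  -- nearest grid point
  have hnear : ∀ x ∈ Set.Icc (0:ℝ) 1, ∃ i ∈ Finset.range (h+1),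
      |x - (i:ℝ)/h| ≤ 1/(2*h) := by
    intro x hx
    obtain ⟨hx0, hx1⟩ := hx
    have hub : (round (x * ↑h) : ℝ) ≤ x * h + 1/2 := round_le_add_half (x * h)
    have hlb : x * ↑h - 1/2 < (round (x * ↑h) : ℝ) := sub_half_lt_round (x * h)
    have h0 : (0:ℤ) ≤ round (x * h) := by
      have h1 : (-1 : ℝ) < (round (x * ↑h) : ℝ) := by nlinarith
      have h2 : (-1 : ℤ) < round (x * ↑h) := by exact_mod_cast h1
      omega
    refine ⟨(round (x * h)).toNat, ?_, ?_⟩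
    · rw [Finset.mem_range, Nat.lt_succ_iff]
      have h1 : (round (x * ↑h) : ℝ) < (h : ℝ) + 1 := by nlinarith
      have h2 : round (x * ↑h) < (h : ℤ) + 1 := by exact_mod_cast h1
      omega
    · have hcast : (((round (x * h)).toNat : ℕ) : ℝ) = (round (x * h) : ℝ) := by
        exact_mod_cast Int.toNat_of_nonneg h0
      have habs : |x * h - round (x * h)| ≤ 1/2 := abs_sub_round (x * h)
      have heq : x - ((round (x * h)).toNat : ℝ)/h = (x * h - round (x * h))/h := by
        field_simp [hcast]
        linarith [hcast]
      rw [heq, abs_div, abs_of_pos hhR]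
      rw [div_le_div_iff₀ hhR (by positivity)]
      nlinarith
  -- global bound on u near u(0,0)
  have hbound : ∀ x ∈ Set.Icc (0:ℝ) 1, ∀ y ∈ Set.Icc (0:ℝ) 1,
      |u (x, y) - u (0, 0)| ≤ 2 * L := by
    intro x hx y hy
    have h1 : |u (x, y) - u (x, 0)| ≤ L * |y - 0| := hLipY x hx y hy 0 h0I
    have h2 : |u (x, 0) - u (0, 0)| ≤ L * |x - 0| := hLipX x hx 0 h0I 0 h0I
    have hy' : |y - 0| ≤ 1 := by rw [abs_le]; constructor <;> [linarith [hy.1]; linarith [hy.2]]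
    have hx' : |x - 0| ≤ 1 := by rw [abs_le]; constructor <;> [linarith [hx.1]; linarith [hx.2]]
    calc |u (x, y) - u (0, 0)| ≤ |u (x, y) - u (x, 0)| + |u (x, 0) - u (0, 0)| :=
          abs_sub_le _ _ _
      _ ≤ L * |y - 0| + L * |x - 0| := add_le_add h1 h2
      _ ≤ 2 * L := by nlinarith
  set F : ℝ → ℝ := fun x => ⨅ y : Set.Icc (0:ℝ) 1, u (x, ↑y) with hF
  have hBdd : ∀ x ∈ Set.Icc (0:ℝ) 1,
      BddBelow (Set.range fun y : Set.Icc (0:ℝ) 1 => u (x, ↑y)) := by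
    intro x hx
    refine ⟨u (0,0) - 2*L, ?_⟩
    rintro v ⟨y, rfl⟩
    have := hbound x hx y y.2
    rw [abs_le] at this; linarith [this.1]
  have hF_le : ∀ x ∈ Set.Icc (0:ℝ) 1, ∀ y ∈ Set.Icc (0:ℝ) 1, F x ≤ u (x, y) := by
    intro x hx y hy
    exact ciInf_le (hBdd x hx) ⟨y, hy⟩
  have hF_ge : ∀ x ∈ Set.Icc (0:ℝ) 1, ∀ c : ℝ,
      (∀ y ∈ Set.Icc (0:ℝ) 1, c ≤ u (x, y)) → c ≤ F x := by
    intro x hx c hc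
    exact le_ciInf fun y => hc y y.2
  -- F is Lipschitz
  have hFlip : ∀ x ∈ Set.Icc (0:ℝ) 1, ∀ x' ∈ Set.Icc (0:ℝ) 1,
      F x ≤ F x' + L * |x - x'| := by
    intro x hx x' hx'
    have : F x - L * |x - x'| ≤ F x' := by
      apply hF_ge x' hx'
      intro y hy
      have h1 := hF_le x hx y hy
      have h2 := hLipX x hx x' hx' y hy
      rw [abs_le] at h2
      linarith [h2.1]
    linarith
  set M : ℕ → ℝ := fun i => (Finset.range (h + 1)).inf' (by simp) (fun j =>
      u ((i : ℝ) / (h : ℝ), (j : ℝ) / (h : ℝ))) with hM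
  set Mtot : ℝ := (Finset.range (h + 1)).sup' (by simp) M with hMtot
  -- grid min vs F at grid points
  have hstep1 : ∀ i ∈ Finset.range (h+1), F ((i:ℝ)/h) ≤ M i := by
    intro i hi
    apply Finset.le_inf'
    intro j hj
    exact hF_le _ (hgrid_mem i hi) _ (hgrid_mem j hj)
  have hstep2 : ∀ i ∈ Finset.range (h+1), M i - L / (2*h) ≤ F ((i:ℝ)/h) := by
    intro i hi
    apply hF_ge _ (hgrid_mem i hi)
    intro y hy
    obtain ⟨j, hj, hjy⟩ := hnear y hy
    have h1 : M i ≤ u ((i:ℝ)/h, (j:ℝ)/h) := Finset.inf'_le _ hj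
    have h2 := hLipY _ (hgrid_mem i hi) y hy _ (hgrid_mem j hj)
    rw [abs_le] at h2
    have h3 : L * |y - (j:ℝ)/h| ≤ L * (1/(2*h)) :=
      mul_le_mul_of_nonneg_left hjy hL.le
    have h4 : L * (1/(2*h)) = L/(2*h) := by ring
    linarith [h2.2]
  -- sup bounds
  have hSBdd : BddAbove (Set.range fun x : Set.Icc (0:ℝ) 1 => F ↑x) := by
    refine ⟨u (0,0) + 2*L, ?_⟩
    rintro v ⟨x, rfl⟩
    have h1 := hF_le x x.2 0 h0I
    have h2 := hbound x x.2 0 h0I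
    rw [abs_le] at h2
    linarith [h2.2]
  set S : ℝ := ⨆ x : Set.Icc (0:ℝ) 1, F ↑x with hS
  have hgoalS : (⨆ x : Set.Icc (0:ℝ) 1, ⨅ y : Set.Icc (0:ℝ) 1, u (↑x, ↑y)) = S := rfl
  have hlow : Mtot - L/(2*h) ≤ S := by
    obtain ⟨i, hi, hieq⟩ := Finset.exists_mem_eq_sup' Finset.nonempty_range_add_one M
    have h1 : M i - L/(2*h) ≤ F ((i:ℝ)/h) := hstep2 i hi
    have h2 : F ((i:ℝ)/h) ≤ S :=
      le_ciSup hSBdd (⟨(i:ℝ)/h, hgrid_mem i hi⟩ : Set.Icc (0:ℝ) 1)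
    rw [hMtot, hieq]
    linarith
  have hhigh : S ≤ Mtot + L/(2*h) := by
    apply ciSup_le
    intro x
    obtain ⟨i, hi, hix⟩ := hnear x x.2
    have h1 : F ↑x ≤ F ((i:ℝ)/h) + L * |↑x - (i:ℝ)/h| :=
      hFlip x x.2 _ (hgrid_mem i hi)
    have h2 : L * |(x:ℝ) - (i:ℝ)/h| ≤ L * (1/(2*h)) :=
      mul_le_mul_of_nonneg_left hix hL.le
    have h3 : F ((i:ℝ)/h) ≤ M i := hstep1 i hi
    have h4 : M i ≤ Mtot := Finset.le_sup' M hi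
    have h5 : L * (1/(2*h)) = L/(2*h) := by ring
    linarith
  constructor
  · rw [abs_le]
    constructor <;> [linarith; linarith]
  · have hceil : L / (2*ε) ≤ (h : ℝ) := by rw [hh]; exact Nat.le_ceil _
    rw [div_le_iff₀ (by positivity)]
    rw [div_le_iff₀ (by positivity)] at hceil
    nlinarith
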